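/- Let q ≥ 17 be a power of an odd prime with q ≡ 1 (mod 3), F = 𝔽_q, and let c₂, c₁, c₋₁ ∈ F. Let J : F → F be defined by J(x) = x³ + c₂x² + c₁x + c₋₁x^{q−2}. Then the image J(F) has at most q − 2 elements; moreover, if 0 does not belong to J(F \ {0}), then the image J(F \ {0}) of the nonzero elements has at most q − 3 elements. -/

import Mathlib

open Finset Polynomial

theorem J_range_small (q p e : ℕ) (hp : p.Prime) (hodd : Odd p) (he : 1 ≤ e)
    (hq : q = p ^ e) (h17 : 17 ≤ q) (hmod : q % 3 = 1)
    (F : Type) [Field F] [Fintype F] (hcard : Fintype.card F = q) (c2 c1 cm1 : F)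
    (J : F → F) (hJ : ∀ x, J x = x ^ 3 + c2 * x ^ 2 + c1 * x + cm1 * x ^ (q - 2)) :
    Set.ncard (Set.range J) ≤ q - 2 ∧
      ((0 : F) ∉ J '' {x : F | x ≠ 0} → Set.ncard (J '' {x : F | x ≠ 0}) ≤ q - 3) := by
  classical
  -- basic facts
  have hq0 : (q : F) = 0 := by
    have := FiniteField.cast_card_eq_zero F
    rwa [hcard] at this
  have hqodd : Odd q := hq ▸ hodd.pow
  have two_ne : (2 : F) ≠ 0 := by
    intro h2
    have hd2 : ringChar F ∣ 2 := by rw [← ringChar.spec]; exact_mod_cast h2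
    have hdq : ringChar F ∣ q := by rw [← ringChar.spec]; exact_mod_cast hq0
    have h1 : ringChar F ≠ 1 := CharP.ringChar_ne_one
    have h2' : ringChar F = 2 := ((Nat.dvd_prime Nat.prime_two).mp hd2).resolve_left h1
    rw [h2'] at hdq
    obtain ⟨k, rfl⟩ := hdq
    simp [Nat.odd_iff, Nat.mul_mod_right] at hqodd
  have hJ0 : J 0 = 0 := by
    rw [hJ]
    rw [zero_pow (by omega : q - 2 ≠ 0)]
    ring
  -- sums of powers over F
  have Z : ∀ i : ℕ, i < q - 1 → ∑ x : F, x ^ i = 0 := by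
    intro i hi
    have := FiniteField.sum_pow_lt_card_sub_one (K := F) i (by rw [hcard]; exact hi)
    exact this
  have Z1 : ∑ x : F, x = 0 := by
    have := Z 1 (by omega); simpa using this
  -- constant sums over units
  have Econst : ∀ c : F, ∑ _u : Fˣ, c = -c := by
    intro c
    rw [Finset.sum_const, Finset.card_univ, Fintype.card_units, hcard, nsmul_eq_mul,
      Nat.cast_sub (by omega : 1 ≤ q), hq0, Nat.cast_one]
    ring
  -- sums of powers over units
  have E : ∀ i : ℕ, 0 < i → i < q - 1 → ∑ u : Fˣ, (u : F) ^ i = 0 := by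
    intro i h0 hi
    have := FiniteField.sum_pow_units F i
    rw [hcard] at this
    rw [if_neg (fun hdvd => by have := Nat.le_of_dvd h0 hdvd; omega)] at this
    rw [← this]
  have Einv : ∀ i : ℕ, 0 < i → i < q - 1 → ∑ u : Fˣ, ((u : F)⁻¹) ^ i = 0 := by
    intro i h0 hi
    have h := Equiv.sum_comp (Equiv.inv Fˣ) (fun u : Fˣ => ((u : F)) ^ i)
    have h2 : ∑ u : Fˣ, ((u : F)⁻¹) ^ i = ∑ u : Fˣ, ((((Equiv.inv Fˣ) u : Fˣ) : F)) ^ i := by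
      apply Finset.sum_congr rfl
      intro u _
      simp
    rw [h2, h, E i h0 hi]
  -- splitting a sum over F into 0 and units
  have sum0 : ∀ f : F → F, ∑ x : F, f x = f 0 + ∑ u : Fˣ, f u := by
    intro f
    rw [← Finset.add_sum_erase _ f (Finset.mem_univ (0 : F))]
    congr 1
    have hmap : (Finset.univ : Finset Fˣ).map ⟨Units.val, Units.val_injective⟩ =
        (Finset.univ : Finset F).erase 0 := by
      ext x
      constructor
      · rintro hx
        rw [Finset.mem_map] at hx
        obtain ⟨u, -, rfl⟩ := hx
        exact Finset.mem_erase.mpr ⟨Units.ne_zero u, Finset.mem_univ _⟩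
      · intro hx
        rw [Finset.mem_erase] at hx
        exact Finset.mem_map.mpr ⟨Units.mk0 x hx.1, Finset.mem_univ _, rfl⟩
    rw [← hmap, Finset.sum_map]
    rfl
  -- x ^ (q-2) is the inverse
  have hpow : ∀ z : F, z ≠ 0 → z ^ (q - 2) = z⁻¹ := by
    intro z hz
    have h1 : z ^ (q - 1) = 1 := by
      have := FiniteField.pow_card_sub_one_eq_one z hz
      rwa [hcard] at this
    have h2 : z ^ (q - 2) * z = 1 := by
      rw [← pow_succ, (by omega : q - 2 + 1 = q - 1)]
      exact h1
    calc z ^ (q - 2) = z ^ (q - 2) * z * z⁻¹ := by field_simp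
    _ = z⁻¹ := by rw [h2, one_mul]
  -- sum of evaluations of a polynomial of degree ≤ q-1
  have sumeval : ∀ h : Polynomial F, h.natDegree ≤ q - 1 →
      ∑ x : F, h.eval x = -(h.coeff (q - 1)) := by
    intro h hdeg
    have hq1 : ∑ x : F, x ^ (q - 1) = -1 := by
      have hs := sum0 (fun x => x ^ (q - 1))
      rw [hs, zero_pow (by omega : q - 1 ≠ 0), zero_add]
      have h1 : ∀ u : Fˣ, ((u : F)) ^ (q - 1) = 1 := by
        intro u
        have := FiniteField.pow_card_sub_one_eq_one (u : F) u.ne_zero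
        rwa [hcard] at this
      rw [Finset.sum_congr rfl (fun u _ => h1 u), Econst 1]
    calc ∑ x : F, h.eval x = ∑ x : F, ∑ n ∈ Finset.range q, h.coeff n * x ^ n :=
          Finset.sum_congr rfl (fun x _ => Polynomial.eval_eq_sum_range' (by omega) x)
    _ = ∑ n ∈ Finset.range q, ∑ x : F, h.coeff n * x ^ n := Finset.sum_comm
    _ = ∑ n ∈ Finset.range q, h.coeff n * ∑ x : F, x ^ n := by
          apply Finset.sum_congr rfl
          intro n _
          rw [Finset.mul_sum]
    _ = h.coeff (q - 1) * ∑ x : F, x ^ (q - 1) := by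
          apply Finset.sum_eq_single_of_mem
          · exact Finset.mem_range.mpr (by omega)
          · intro n hn hne
            rw [Z n (by rw [Finset.mem_range] at hn; omega), mul_zero]
    _ = -(h.coeff (q - 1)) := by rw [hq1]; ring
  -- the sum of J over F vanishes
  have hsum1 : ∑ x : F, J x = 0 := by
    rw [Finset.sum_congr rfl (fun x _ => hJ x)]
    rw [Finset.sum_add_distrib, Finset.sum_add_distrib, Finset.sum_add_distrib,
      ← Finset.mul_sum, ← Finset.mul_sum, ← Finset.mul_sum]
    rw [Z 3 (by omega), Z 2 (by omega), Z1, Z (q - 2) (by omega)]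
    ring
  -- the sum of J^2 over F
  have key2 : ∑ x : F, (J x) ^ 2 = -(2 * (c1 * cm1)) := by
    have hs := sum0 (fun x => (J x) ^ 2)
    rw [hs, hJ0, zero_pow (by norm_num : (2:ℕ) ≠ 0), zero_add]
    have hpt : ∀ u : Fˣ, (J (u : F)) ^ 2 =
        (u:F)^6 + (2*c2)*(u:F)^5 + (c2^2+2*c1)*(u:F)^4 + (2*(c2*c1))*(u:F)^3
        + (c1^2+2*cm1)*(u:F)^2 + (2*(c2*cm1))*(u:F)^1 + cm1^2*((u:F)⁻¹)^2
        + 2*(c1*cm1) := by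
      intro u
      have hz : (u:F) ≠ 0 := u.ne_zero
      rw [hJ, hpow _ hz]
      field_simp
      ring
    rw [Finset.sum_congr rfl (fun u _ => hpt u)]
    simp only [Finset.sum_add_distrib, ← Finset.mul_sum]
    rw [E 6 (by omega) (by omega), E 5 (by omega) (by omega), E 4 (by omega) (by omega),
      E 3 (by omega) (by omega), E 2 (by omega) (by omega), E 1 (by omega) (by omega),
      Einv 2 (by omega) (by omega), Econst cm1]
    ring
  -- the sum of J^4 over F
  have key4 : ∑ x : F, (J x) ^ 4 = -(4*cm1^3 + 6*(c1^2*cm1^2)) := by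
    have hs := sum0 (fun x => (J x) ^ 4)
    rw [hs, hJ0, zero_pow (by norm_num : (4:ℕ) ≠ 0), zero_add]
    have hpt : ∀ u : Fˣ, (J (u : F)) ^ 4 =
        (u:F)^12 + (4*c2)*(u:F)^11 + (4*c1 + 6*c2^2)*(u:F)^10
        + (12*(c2*c1) + 4*c2^3)*(u:F)^9
        + (4*cm1 + 6*c1^2 + 12*(c2^2*c1) + c2^4)*(u:F)^8
        + (12*(c2*cm1) + 12*(c2*c1^2) + 4*(c2^3*c1))*(u:F)^7
        + (12*(c1*cm1) + 4*c1^3 + 12*(c2^2*cm1) + 6*(c2^2*c1^2))*(u:F)^6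
        + (24*(c2*c1*cm1) + 4*(c2*c1^3) + 4*(c2^3*cm1))*(u:F)^5
        + (6*cm1^2 + 12*(c1^2*cm1) + c1^4 + 12*(c2^2*c1*cm1))*(u:F)^4
        + (12*(c2*cm1^2) + 12*(c2*c1^2*cm1))*(u:F)^3
        + (12*(c1*cm1^2) + 4*(c1^3*cm1) + 6*(c2^2*cm1^2))*(u:F)^2
        + (12*(c2*c1*cm1^2))*(u:F)^1
        + (4*(c2*cm1^3))*((u:F)⁻¹)^1 + (4*(c1*cm1^3))*((u:F)⁻¹)^2
        + cm1^4*((u:F)⁻¹)^4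
        + (4*cm1^3 + 6*(c1^2*cm1^2)) := by
      intro u
      have hz : (u:F) ≠ 0 := u.ne_zero
      rw [hJ, hpow _ hz]
      field_simp
      ring
    rw [Finset.sum_congr rfl (fun u _ => hpt u)]
    simp only [Finset.sum_add_distrib, ← Finset.mul_sum]
    rw [E 12 (by omega) (by omega), E 11 (by omega) (by omega), E 10 (by omega) (by omega),
      E 9 (by omega) (by omega), E 8 (by omega) (by omega), E 7 (by omega) (by omega),
      E 6 (by omega) (by omega), E 5 (by omega) (by omega), E 4 (by omega) (by omega),
      E 3 (by omega) (by omega), E 2 (by omega) (by omega), E 1 (by omega) (by omega),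
      Einv 1 (by omega) (by omega), Einv 2 (by omega) (by omega),
      Einv 4 (by omega) (by omega), Econst (cm1^3), Econst (cm1^2)]
    ring
  -- J is not bijective
  have hnotbij : ¬ Function.Bijective J := by
    intro hbij
    have hb2 : ∑ x : F, (J x) ^ 2 = 0 := by
      have h' := hbij.sum_comp (fun y : F => y ^ 2)
      rw [h']
      exact Z 2 (by omega)
    have hb4 : ∑ x : F, (J x) ^ 4 = 0 := by
      have h' := hbij.sum_comp (fun y : F => y ^ 4)
      rw [h']
      exact Z 4 (by omega)
    have hc1cm1 : c1 * cm1 = 0 := by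
      rw [key2, neg_eq_zero] at hb2
      rcases mul_eq_zero.mp hb2 with h | h
      · exact absurd h two_ne
      · exact h
    have hcm1 : cm1 = 0 := by
      rw [key4, neg_eq_zero] at hb4
      have h6 : (6:F) * (c1 ^ 2 * cm1 ^ 2) = 6 * (c1 * cm1) ^ 2 := by ring
      rw [h6, hc1cm1] at hb4
      have h4' : (4:F) * cm1 ^ 3 = 0 := by
        rw [← hb4]; ring
      have four : (4:F) ≠ 0 := by
        have h22 : (4:F) = 2 * 2 := by norm_num
        rw [h22]
        exact mul_ne_zero two_ne two_ne
      have := (mul_eq_zero.mp h4').resolve_left four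
      exact pow_eq_zero_iff (by norm_num) |>.mp this
    -- J is now a cubic polynomial map
    have hJc : ∀ x : F, J x = x ^ 3 + c2 * x ^ 2 + c1 * x := by
      intro x
      rw [hJ, hcm1]
      ring
    set K := (q - 1) / 3 with hKdef
    have hK3 : 3 * K = q - 1 := by omega
    set h : Polynomial F := (X ^ 3 + C c2 * X ^ 2 + C c1 * X) ^ K with hhdef
    have hmono : (X ^ 3 + C c2 * X ^ 2 + C c1 * X : Polynomial F).Monic := by
      monicity!
    have hdeg3 : (X ^ 3 + C c2 * X ^ 2 + C c1 * X : Polynomial F).natDegree = 3 := by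
      compute_degree!
    have hmonh : h.Monic := hmono.pow K
    have hdegh : h.natDegree = q - 1 := by
      rw [hhdef, Polynomial.natDegree_pow, hdeg3]
      omega
    have hcoeff : h.coeff (q - 1) = 1 := by
      rw [← hdegh]
      exact hmonh.coeff_natDegree
    have heval : ∀ x : F, (J x) ^ K = h.eval x := by
      intro x
      rw [hJc, hhdef]
      simp [eval_pow, eval_add, eval_mul, eval_C, eval_X]
    have hone : ∑ x : F, (J x) ^ K = -1 := by
      rw [Finset.sum_congr rfl (fun x _ => heval x), sumeval h (le_of_eq hdegh), hcoeff]
    have hzero : ∑ x : F, (J x) ^ K = 0 := by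
      have h' := hbij.sum_comp (fun y : F => y ^ K)
      rw [h']
      exact Z K (by omega)
    rw [hzero] at hone
    norm_num at hone
  -- the image of J has at most q - 2 elements (Finset version)
  have hIcard : (Finset.univ.image J).card ≤ q - 2 := by
    set I := Finset.univ.image J with hIdef
    by_contra hcon
    push_neg at hcon
    have hle : I.card ≤ q := by
      have := Finset.card_le_card (Finset.subset_univ I)
      rwa [Finset.card_univ, hcard] at this
    rcases (by omega : I.card = q - 1 ∨ I.card = q) with hc | hc
    · -- exactly one value is doubled and one is missing : contradiction with `hsum1`
      obtain ⟨b, hb⟩ : ∃ b, b ∉ I := by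
        by_contra hball
        push_neg at hball
        have : I = Finset.univ := Finset.eq_univ_iff_forall.mpr hball
        rw [this, Finset.card_univ, hcard] at hc
        omega
      have hsumc : ∑ y ∈ I, (Finset.univ.filter (fun x => J x = y)).card = q := by
        have h' := Finset.card_eq_sum_card_image J (Finset.univ : Finset F)
        rw [Finset.card_univ, hcard] at h'
        exact h'.symm
      have hpos : ∀ y ∈ I, 1 ≤ (Finset.univ.filter (fun x => J x = y)).card := by
        intro y hy
        obtain ⟨x, -, rfl⟩ := Finset.mem_image.mp hy
        exact Finset.card_pos.mpr ⟨x, by simp⟩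
      obtain ⟨a, ha, hca⟩ : ∃ a ∈ I, 2 ≤ (Finset.univ.filter (fun x => J x = a)).card := by
        by_contra hno
        push_neg at hno
        have hle1 : ∑ y ∈ I, (Finset.univ.filter (fun x => J x = y)).card ≤ ∑ _y ∈ I, 1 :=
          Finset.sum_le_sum (fun y hy => by have := hno y hy; omega)
        rw [Finset.sum_const, smul_eq_mul, mul_one, hc] at hle1
        omega
      have herase : ∑ y ∈ I.erase a, (Finset.univ.filter (fun x => J x = y)).card
          = q - (Finset.univ.filter (fun x => J x = a)).card := by
        have h' := Finset.add_sum_erase I (fun y => (Finset.univ.filter (fun x => J x = y)).card) ha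
        rw [hsumc] at h'
        omega
      have hcard_erase : (I.erase a).card = q - 2 := by
        rw [Finset.card_erase_of_mem ha, hc]
        omega
      have hgeq : (I.erase a).card ≤ ∑ y ∈ I.erase a, (Finset.univ.filter (fun x => J x = y)).card := by
        have h' : ∑ _y ∈ I.erase a, 1 ≤ ∑ y ∈ I.erase a, (Finset.univ.filter (fun x => J x = y)).card :=
          Finset.sum_le_sum (fun y hy => hpos y (Finset.mem_of_mem_erase hy))
        rwa [Finset.sum_const, smul_eq_mul, mul_one] at h'
      have hca2 : (Finset.univ.filter (fun x => J x = a)).card = 2 := by omega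
      have hall1 : ∀ y ∈ I.erase a, (Finset.univ.filter (fun x => J x = y)).card = 1 := by
        intro y hy
        by_contra hne
        have h2y : 2 ≤ (Finset.univ.filter (fun x => J x = y)).card := by
          have := hpos y (Finset.mem_of_mem_erase hy)
          omega
        have hlt : ∑ _y ∈ I.erase a, 1 < ∑ y ∈ I.erase a, (Finset.univ.filter (fun x => J x = y)).card :=
          Finset.sum_lt_sum (fun i hi => hpos i (Finset.mem_of_mem_erase hi)) ⟨y, hy, by omega⟩
        rw [Finset.sum_const, smul_eq_mul, mul_one] at hlt
        omega
      have hcomp : ∑ x : F, J x = ∑ y ∈ I, (Finset.univ.filter (fun x => J x = y)).card • y := by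
        have h' := Finset.sum_comp (s := (Finset.univ : Finset F)) (fun y : F => y) J
        simpa using h'
      have hsplit : ∑ y ∈ I, (Finset.univ.filter (fun x => J x = y)).card • y = a + ∑ y ∈ I, y := by
        rw [← Finset.add_sum_erase I (fun y => (Finset.univ.filter (fun x => J x = y)).card • y) ha,
          ← Finset.add_sum_erase I (fun y => y) ha, hca2,
          Finset.sum_congr rfl (fun y hy => by rw [hall1 y hy, one_nsmul] :
            ∀ y ∈ I.erase a, (Finset.univ.filter (fun x => J x = y)).card • y = y)]
        rw [two_nsmul]
        ring
      have hIsum : ∑ y ∈ I, y = -b := by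
        have huniv : insert b I = Finset.univ := by
          apply Finset.eq_univ_of_card
          rw [Finset.card_insert_of_notMem hb, hc, hcard]
          omega
        have hz := Z1
        rw [← huniv, Finset.sum_insert hb] at hz
        linear_combination hz
      rw [hcomp, hsplit, hIsum] at hsum1
      have hab : a = b := by linear_combination hsum1
      rw [hab] at ha
      exact hb ha
    · -- J would be bijective
      have hIuniv : I = Finset.univ := Finset.eq_univ_of_card I (by rw [hc, hcard])
      have hsurj : Function.Surjective J := by
        intro y
        have hy : y ∈ I := hIuniv ▸ Finset.mem_univ y
        obtain ⟨x, -, hx⟩ := Finset.mem_image.mp hy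
        exact ⟨x, hx⟩
      exact hnotbij ((Fintype.bijective_iff_surjective_and_card J).mpr ⟨hsurj, rfl⟩)
  -- conclusion
  have hpart1 : Set.ncard (Set.range J) ≤ q - 2 := by
    have hre : Set.range J = ↑(Finset.univ.image J) := by
      rw [Finset.coe_image, Finset.coe_univ, Set.image_univ]
    rw [hre, Set.ncard_coe_finset]
    exact hIcard
  refine ⟨hpart1, fun h0 => ?_⟩
  have hsub : insert (0:F) (J '' {x : F | x ≠ 0}) ⊆ Set.range J := by
    intro y hy
    rcases Set.mem_insert_iff.mp hy with rfl | ⟨x, -, rfl⟩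
    · exact ⟨0, hJ0⟩
    · exact ⟨x, rfl⟩
  have hins : (insert (0:F) (J '' {x : F | x ≠ 0})).ncard
      = (J '' {x : F | x ≠ 0}).ncard + 1 := Set.ncard_insert_of_notMem h0 (Set.toFinite _)
  have hmono := Set.ncard_le_ncard hsub (Set.toFinite _)
  omega
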